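/- In the Classic Variant of the Mixed Deletion Game played on path graphs, no path position P_n has a game value equal to a negative integer. -/

import Mathlib

namespace SetTheory

/-- Pre-games (Conway), as in the older Mathlib `SetTheory.PGame`. -/
inductive PGame : Type (u + 1)
  | mk : ∀ α β : Type u, (α → PGame) → (β → PGame) → PGame

namespace PGame

/-- Immediate option relation. -/
inductive IsOpt : PGame.{u} → PGame.{u} → Prop
  | moveLeft {xl xr : Type u} {xL : xl → PGame} {xR : xr → PGame} (i : xl) :
      IsOpt (xL i) (mk xl xr xL xR)
  | moveRight {xl xr : Type u} {xL : xl → PGame} {xR : xr → PGame} (j : xr) :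
      IsOpt (xR j) (mk xl xr xL xR)

theorem isOpt_wf : WellFounded IsOpt.{u} :=
  ⟨fun x => by
    induction x with
    | mk l r L R IHl IHr =>
      refine ⟨_, fun y h => ?_⟩
      cases h with
      | moveLeft i => exact IHl i
      | moveRight j => exact IHr j⟩

instance : WellFoundedRelation PGame.{u} := ⟨IsOpt, isOpt_wf⟩

/-- The pair `(x ≤ y, x ⧏ y)`. -/
noncomputable def leLF (x : PGame.{u}) : PGame.{u} → Prop × Prop :=
  PGame.rec (motive := fun _ => PGame.{u} → Prop × Prop)
    (fun xl xr xL xR IHxl IHxr y =>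
      PGame.rec (motive := fun _ => Prop × Prop)
        (fun yl yr yL yR IHyl IHyr =>
          ((∀ i, (IHxl i (mk yl yr yL yR)).2) ∧ ∀ j, (IHyr j).2,
            (∃ i, (IHyl i).1) ∨ ∃ j, (IHxr j (mk yl yr yL yR)).1)) y) x

instance : LE PGame.{u} := ⟨fun x y => (leLF x y).1⟩

/-- Less or fuzzy: `x ⧏ y ↔ ¬ y ≤ x`. -/
def LF (x y : PGame.{u}) : Prop := ¬y ≤ x

infixl:50 " ⧏ " => PGame.LF

instance : HasEquiv PGame.{u} := ⟨fun x y => x ≤ y ∧ y ≤ x⟩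

instance : Zero PGame.{u} := ⟨⟨PEmpty, PEmpty, PEmpty.elim, PEmpty.elim⟩⟩

instance : One PGame.{u} := ⟨⟨PUnit, PEmpty, fun _ => 0, PEmpty.elim⟩⟩

def neg : PGame.{u} → PGame.{u}
  | ⟨l, r, L, R⟩ => ⟨r, l, fun i => neg (R i), fun i => neg (L i)⟩

instance : Neg PGame.{u} := ⟨neg⟩

def add : PGame.{u} → PGame.{u} → PGame.{u}
  | mk xl xr xL xR, mk yl yr yL yR =>
    mk (xl ⊕ yl) (xr ⊕ yr)
      (Sum.rec (fun i => add (xL i) (mk yl yr yL yR)) (fun i => add (mk xl xr xL xR) (yL i)))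
      (Sum.rec (fun i => add (xR i) (mk yl yr yL yR)) (fun i => add (mk xl xr xL xR) (yR i)))
termination_by x y => (x, y)
decreasing_by
  · exact Prod.Lex.left _ _ (IsOpt.moveLeft _)
  · exact Prod.Lex.right _ (IsOpt.moveLeft _)
  · exact Prod.Lex.left _ _ (IsOpt.moveRight _)
  · exact Prod.Lex.right _ (IsOpt.moveRight _)

instance : Add PGame.{u} := ⟨add⟩

/-- The game `* = {0 | 0}`. -/
def star : PGame.{u} := ⟨PUnit, PUnit, fun _ => 0, fun _ => 0⟩

/-- The nim game `*o`. -/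
noncomputable def nim (o : Ordinal.{u}) : PGame.{u} :=
  ⟨o.ToType, o.ToType,
    fun x => nim (Ordinal.ToType.mk.symm x).val,
    fun x => nim (Ordinal.ToType.mk.symm x).val⟩
termination_by o
decreasing_by all_goals exact (Ordinal.ToType.mk.symm x).prop

end PGame

end SetTheory

open SetTheory PGame

namespace MixedDeletion

/-- The degree of a vertex `v` with respect to an edge set `E`. -/
def deg (E : Finset (Sym2 ℕ)) (v : ℕ) : ℕ := (E.filter (fun e => v ∈ e)).card

/-- The graph position with vertex set `V` and edge set `E` has no isolated vertex. -/
def NoIsol (V : Finset ℕ) (E : Finset (Sym2 ℕ)) : Prop := ∀ v ∈ V, 0 < deg E v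

/-- Result of Left deleting the vertex `v`: remove `v` and all incident edges. -/
def delV (V : Finset ℕ) (E : Finset (Sym2 ℕ)) (v : ℕ) : Finset ℕ × Finset (Sym2 ℕ) :=
  (V.erase v, E.filter (fun e => v ∉ e))

/-- Left may legally delete vertex `v` under the base (Classic) rules:
`v` is a vertex and the deletion creates no isolated vertex. -/
def LeftOK (V : Finset ℕ) (E : Finset (Sym2 ℕ)) (v : ℕ) : Prop :=
  v ∈ V ∧ NoIsol (V.erase v) (E.filter (fun e => v ∉ e))

/-- Right may legally delete edge `e` under the base (Classic) rules:
`e` is an edge and the deletion creates no isolated vertex. -/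
def RightOK (V : Finset ℕ) (E : Finset (Sym2 ℕ)) (e : Sym2 ℕ) : Prop :=
  e ∈ E ∧ NoIsol V (E.erase e)

/-- The Classic Variant of the Mixed Deletion Game, as a partizan game:
Left deletes a vertex (and incident edges), Right deletes an edge,
and no move may create an isolated vertex. -/
def classicG : Finset ℕ → Finset (Sym2 ℕ) → PGame
  | V, E =>
    PGame.mk {v : ℕ // LeftOK V E v} {e : Sym2 ℕ // RightOK V E e}
      (fun x => classicG (V.erase x.val) (E.filter (fun e => x.val ∉ e)))
      (fun x => classicG V (E.erase x.val))
  termination_by V E => V.card + E.card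
  decreasing_by
  · have h1 : (V.erase x.val).card < V.card := Finset.card_erase_lt_of_mem x.2.1
    have h2 : (E.filter (fun e => x.val ∉ e)).card ≤ E.card := Finset.card_filter_le _ _
    omega
  · have h1 : (E.erase x.val).card < E.card := Finset.card_erase_lt_of_mem x.2.1
    omega

/-- The Forbidden Leaf Variant: as the Classic Variant, but Left may not
delete leaf vertices (vertices of degree one). -/
def flG : Finset ℕ → Finset (Sym2 ℕ) → PGame
  | V, E =>
    PGame.mk {v : ℕ // LeftOK V E v ∧ deg E v ≠ 1} {e : Sym2 ℕ // RightOK V E e}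
      (fun x => flG (V.erase x.val) (E.filter (fun e => x.val ∉ e)))
      (fun x => flG V (E.erase x.val))
  termination_by V E => V.card + E.card
  decreasing_by
  · have h1 : (V.erase x.val).card < V.card := Finset.card_erase_lt_of_mem x.2.1.1
    have h2 : (E.filter (fun e => x.val ∉ e)).card ≤ E.card := Finset.card_filter_le _ _
    omega
  · have h1 : (E.erase x.val).card < E.card := Finset.card_erase_lt_of_mem x.2.1
    omega

/-- The Mutual Failures Variant: as the Classic Variant, but in any graph
position a player has a legal move if and only if the opponent does; i.e. a
base-rules move is legal only if the opponent also has a base-rules move. -/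
def mfG : Finset ℕ → Finset (Sym2 ℕ) → PGame
  | V, E =>
    PGame.mk {v : ℕ // LeftOK V E v ∧ ∃ e, RightOK V E e}
      {e : Sym2 ℕ // RightOK V E e ∧ ∃ v, LeftOK V E v}
      (fun x => mfG (V.erase x.val) (E.filter (fun e => x.val ∉ e)))
      (fun x => mfG V (E.erase x.val))
  termination_by V E => V.card + E.card
  decreasing_by
  · have h1 : (V.erase x.val).card < V.card := Finset.card_erase_lt_of_mem x.2.1.1
    have h2 : (E.filter (fun e => x.val ∉ e)).card ≤ E.card := Finset.card_filter_le _ _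
    omega
  · have h1 : (E.erase x.val).card < E.card := Finset.card_erase_lt_of_mem x.2.1.1
    omega

/-- Edge set of the path graph on vertices `0, 1, …, n-1`. -/
def pathE (n : ℕ) : Finset (Sym2 ℕ) := (Finset.range (n - 1)).image (fun i => s(i, i + 1))

/-- Edge set of the cycle graph on vertices `0, 1, …, n-1`. -/
def cycleE (n : ℕ) : Finset (Sym2 ℕ) := (Finset.range n).image (fun i => s(i, (i + 1) % n))

/-- Edge set of the complete graph on vertices `0, 1, …, n-1`. -/
def completeE (n : ℕ) : Finset (Sym2 ℕ) := (Finset.range n).sym2.filter (fun e => ¬ e.IsDiag)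

/-- The path position `P_n` in the Classic Variant. -/
def classicPath (n : ℕ) : PGame := classicG (Finset.range n) (pathE n)

/-- The cycle position `C_n` in the Classic Variant. -/
def classicCycle (n : ℕ) : PGame := classicG (Finset.range n) (cycleE n)

/-- The complete graph position `K_n` in the Classic Variant. -/
def classicComplete (n : ℕ) : PGame := classicG (Finset.range n) (completeE n)

/-- The path position `P_n` in the Forbidden Leaf Variant. -/
def flPath (n : ℕ) : PGame := flG (Finset.range n) (pathE n)

/-- The cycle position `C_n` in the Forbidden Leaf Variant. -/
def flCycle (n : ℕ) : PGame := flG (Finset.range n) (cycleE n)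

/-- The complete graph position `K_n` in the Forbidden Leaf Variant. -/
def flComplete (n : ℕ) : PGame := flG (Finset.range n) (completeE n)

/-- The path position `P_n` in the Mutual Failures Variant. -/
def mfPath (n : ℕ) : PGame := mfG (Finset.range n) (pathE n)

/-- The cycle position `C_n` in the Mutual Failures Variant. -/
def mfCycle (n : ℕ) : PGame := mfG (Finset.range n) (cycleE n)

/-- The complete graph position `K_n` in the Mutual Failures Variant. -/
def mfComplete (n : ℕ) : PGame := mfG (Finset.range n) (completeE n)

/-- The partizan game equal to a natural number `n`. -/
def natPG : ℕ → PGame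
  | 0 => 0
  | n + 1 => natPG n + 1

/-- The partizan game equal to an integer `z`. -/
def intPG (z : ℤ) : PGame := if 0 ≤ z then natPG z.toNat else -natPG (-z).toNat

/-- The game up, `↑ = {0 | *}`. -/
def up : PGame := PGame.mk PUnit PUnit (fun _ => 0) (fun _ => star)

/-- The game down, `↓ = {* | 0}`. -/
def down : PGame := -up

/-- The sum of `n` copies of up. -/
def natUp : ℕ → PGame
  | 0 => 0
  | n + 1 => natUp n + up

/-- The game `z·↑`: `|z|` copies of up if `z ≥ 0`, and `|z|` copies of down otherwise. -/
def zUp (z : ℤ) : PGame := if 0 ≤ z then natUp z.toNat else -natUp (-z).toNat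

/-- Two games have the same outcome: Left wins moving first in one iff in the other,
and Right wins moving first in one iff in the other. -/
def SameOutcome (A B : PGame) : Prop := (0 ⧏ A ↔ 0 ⧏ B) ∧ (A ⧏ 0 ↔ B ⧏ 0)

/-- Far-star equivalence: `G + X + ✶` and `H + X + ✶` have the same outcome for
every game `X`, where `✶` (far star) is any nim-heap `*k` with `k ≥ 2`. -/
def FarStarEquiv (G H : PGame) : Prop :=
  ∀ (X : PGame) (k : ℕ), 2 ≤ k → SameOutcome (G + X + nim k) (H + X + nim k)

/-- `G` has atomic weight `z` if `G` is far-star equivalent to `z·↑`. -/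
def AtomicWeight (G : PGame) (z : ℤ) : Prop := FarStarEquiv G (zUp z)

/-- A game is all-small if in every subposition Left has a move iff Right has a move. -/
def AllSmall : PGame → Prop
  | PGame.mk l r L R =>
    (Nonempty l ↔ Nonempty r) ∧ (∀ i, AllSmall (L i)) ∧ (∀ j, AllSmall (R j))

end MixedDeletion

namespace SetTheory

namespace PGame

def LeftMoves : PGame.{u} → Type u
  | mk l _ _ _ => l

def RightMoves : PGame.{u} → Type u
  | mk _ r _ _ => r

def moveLeft : (g : PGame.{u}) → LeftMoves g → PGame.{u}
  | mk _ _ L _ => L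

def moveRight : (g : PGame.{u}) → RightMoves g → PGame.{u}
  | mk _ _ _ R => R

theorem leLF_aux (x y : PGame.{u}) :
    ((leLF x y).2 ↔ ¬ (leLF y x).1) ∧ ((leLF y x).2 ↔ ¬ (leLF x y).1) := by
  induction x generalizing y with
  | mk xl xr xL xR IHxl IHxr =>
  induction y with
  | mk yl yr yL yR IHyl IHyr =>
  constructor
  · show ((∃ i, (leLF (mk xl xr xL xR) (yL i)).1) ∨ ∃ j, (leLF (xR j) (mk yl yr yL yR)).1) ↔
      ¬ ((∀ i, (leLF (yL i) (mk xl xr xL xR)).2) ∧ ∀ j, (leLF (mk yl yr yL yR) (xR j)).2)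
    constructor
    · rintro (⟨i, h⟩ | ⟨j, h⟩) ⟨h1, h2⟩
      · exact (IHyl i).2.1 (h1 i) h
      · exact (IHxr j _).2.1 (h2 j) h
    · intro h
      by_contra h'
      apply h
      constructor
      · intro i
        exact (IHyl i).2.2 (fun hh => h' (Or.inl ⟨i, hh⟩))
      · intro j
        exact (IHxr j _).2.2 (fun hh => h' (Or.inr ⟨j, hh⟩))
  · show ((∃ i, (leLF (mk yl yr yL yR) (xL i)).1) ∨ ∃ j, (leLF (yR j) (mk xl xr xL xR)).1) ↔
      ¬ ((∀ i, (leLF (xL i) (mk yl yr yL yR)).2) ∧ ∀ j, (leLF (mk xl xr xL xR) (yR j)).2)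
    constructor
    · rintro (⟨i, h⟩ | ⟨j, h⟩) ⟨h1, h2⟩
      · exact (IHxl i _).1.1 (h1 i) h
      · exact (IHyr j).1.1 (h2 j) h
    · intro h
      by_contra h'
      apply h
      constructor
      · intro i
        exact (IHxl i _).1.2 (fun hh => h' (Or.inl ⟨i, hh⟩))
      · intro j
        exact (IHyr j).1.2 (fun hh => h' (Or.inr ⟨j, hh⟩))

theorem leLF_snd (x y : PGame.{u}) : (leLF x y).2 ↔ x ⧏ y := (leLF_aux x y).1

theorem le_iff_forall_lf {x y : PGame.{u}} :
    x ≤ y ↔ (∀ i, x.moveLeft i ⧏ y) ∧ ∀ j, x ⧏ y.moveRight j := by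
  cases x with
  | mk xl xr xL xR =>
  cases y with
  | mk yl yr yL yR =>
  show ((∀ i, (leLF (xL i) (mk yl yr yL yR)).2) ∧ ∀ j, (leLF (mk xl xr xL xR) (yR j)).2) ↔ _
  exact and_congr (forall_congr' fun i => leLF_snd _ _) (forall_congr' fun j => leLF_snd _ _)

theorem not_le {x y : PGame.{u}} : ¬ x ≤ y ↔ y ⧏ x := Iff.rfl

theorem not_lf {x y : PGame.{u}} : ¬ x ⧏ y ↔ y ≤ x := not_not

theorem le_trans_aux {x y z : PGame.{u}}
    (h₁ : ∀ {i}, y ≤ z → z ≤ x.moveLeft i → y ≤ x.moveLeft i)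
    (h₂ : ∀ {j}, z.moveRight j ≤ x → x ≤ y → z.moveRight j ≤ y) (hxy : x ≤ y) (hyz : y ≤ z) :
    x ≤ z := by
  refine le_iff_forall_lf.2 ⟨fun i h => ?_, fun j h => ?_⟩
  · exact (le_iff_forall_lf.1 hxy).1 i (h₁ hyz h)
  · exact (le_iff_forall_lf.1 hyz).2 j (h₂ h hxy)

theorem pg_le_trans_all (x y z : PGame.{u}) :
    (x ≤ y → y ≤ z → x ≤ z) ∧ (y ≤ z → z ≤ x → y ≤ x) ∧ (z ≤ x → x ≤ y → z ≤ y) := by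
  induction x generalizing y z with
  | mk xl xr xL xR IHxl IHxr =>
  induction y generalizing z with
  | mk yl yr yL yR IHyl IHyr =>
  induction z with
  | mk zl zr zL zR IHzl IHzr =>
  exact ⟨le_trans_aux (fun {i} => (IHxl i _ _).2.1) fun {j} => (IHzr j).2.2,
    le_trans_aux (fun {i} => (IHyl i _).2.2) fun {j} => (IHxr j _ _).1,
    le_trans_aux (fun {i} => (IHzl i).1) fun {j} => (IHyr j _).2.1⟩

theorem pg_le_trans {x y z : PGame.{u}} (h1 : x ≤ y) (h2 : y ≤ z) : x ≤ z :=
  (pg_le_trans_all x y z).1 h1 h2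

theorem add_mk' (xl xr : Type u) (xL : xl → PGame.{u}) (xR : xr → PGame.{u})
    (yl yr : Type u) (yL : yl → PGame.{u}) (yR : yr → PGame.{u}) :
    mk xl xr xL xR + mk yl yr yL yR = mk (xl ⊕ yl) (xr ⊕ yr)
      (Sum.rec (fun i => add (xL i) (mk yl yr yL yR)) (fun i => add (mk xl xr xL xR) (yL i)))
      (Sum.rec (fun i => add (xR i) (mk yl yr yL yR)) (fun i => add (mk xl xr xL xR) (yR i))) := by
  show add _ _ = _
  rw [add]

end PGame

end SetTheory

namespace MixedDeletion

/-! ### Auxiliary development for the main theorem -/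

/-- A "good" position: no isolated vertex, and every edge is a non-loop
with both endpoints in the vertex set. -/
def Good (V : Finset ℕ) (E : Finset (Sym2 ℕ)) : Prop :=
  NoIsol V E ∧ ∀ e ∈ E, ¬ e.IsDiag ∧ ∀ v ∈ e, v ∈ V

lemma deg_pos_iff {E : Finset (Sym2 ℕ)} {v : ℕ} :
    0 < deg E v ↔ ∃ e ∈ E, v ∈ e := by
  rw [deg, Finset.card_pos, Finset.filter_nonempty_iff]

/-- If Left is stuck at a good position, every vertex has a "pendant" neighbour. -/
lemma leaf_of_stuck {V : Finset ℕ} {E : Finset (Sym2 ℕ)}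
    (hL : ∀ v, ¬ LeftOK V E v) {a : ℕ} (ha : a ∈ V) :
    ∃ u ∈ V, u ≠ a ∧ ∀ e' ∈ E, u ∈ e' → a ∈ e' := by
  have h := hL a
  rw [LeftOK, not_and] at h
  have h2 := h ha
  rw [NoIsol] at h2
  push_neg at h2
  obtain ⟨u, hu, hdeg⟩ := h2
  refine ⟨u, Finset.mem_of_mem_erase hu, Finset.ne_of_mem_erase hu, ?_⟩
  intro e' he' hue'
  by_contra hae
  have hmem : e' ∈ (E.filter (fun e => a ∉ e)) := Finset.mem_filter.2 ⟨he', hae⟩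
  have : 0 < deg (E.filter (fun e => a ∉ e)) u :=
    deg_pos_iff.2 ⟨e', hmem, hue'⟩
  omega

/-- Key combinatorial fact: at a good position, if Left has no legal move then
neither does Right. -/
lemma stuck_right {V : Finset ℕ} {E : Finset (Sym2 ℕ)}
    (hG : Good V E) (hL : ∀ v, ¬ LeftOK V E v) : ∀ e, ¬ RightOK V E e := by
  intro e
  induction e using Sym2.ind with
  | _ a b =>
    rintro ⟨heE, hNI⟩
    obtain ⟨hd, hin⟩ := hG.2 _ heE
    have hab : a ≠ b := by rwa [Sym2.mk_isDiag_iff] at hd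
    have ha : a ∈ V := hin a (Sym2.mem_iff.2 (Or.inl rfl))
    obtain ⟨u, huV, hua, hu⟩ := leaf_of_stuck hL ha
    obtain ⟨w, hwV, hwu, hw⟩ := leaf_of_stuck hL huV
    -- w has an edge, which must then be s(u,a); hence w = a
    obtain ⟨ew, hewE, hwew⟩ := deg_pos_iff.1 (hG.1 w hwV)
    have huew : u ∈ ew := hw ew hewE hwew
    have haew : a ∈ ew := hu ew hewE huew
    have hew : ew = s(u, a) := (Sym2.mem_and_mem_iff hua).1 ⟨huew, haew⟩
    have hwa : w = a := by
      rcases Sym2.mem_iff.1 (hew ▸ hwew) with h | h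
      · exact absurd h hwu
      · exact h
    have hA : ∀ e' ∈ E, a ∈ e' → u ∈ e' := fun e' he ha' => hw e' he (hwa.symm ▸ ha')
    -- so every edge containing a contains u; in particular b = u
    have hbu : b = u := by
      have : u ∈ s(a, b) := hA _ heE (Sym2.mem_iff.2 (Or.inl rfl))
      rcases Sym2.mem_iff.1 this with h | h
      · exact absurd h hua
      · exact h.symm
    rw [hbu] at hNI
    -- after erasing e = s(a,u), the vertex u is isolated: contradiction
    obtain ⟨e'', he''E, hue''⟩ := deg_pos_iff.1 (hNI u huV)
    have hae'' : a ∈ e'' := hu e'' (Finset.mem_of_mem_erase he''E) hue''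
    have : e'' = s(u, a) := (Sym2.mem_and_mem_iff hua).1 ⟨hue'', hae''⟩
    have hne : e'' ≠ s(a, u) := Finset.ne_of_mem_erase he''E
    exact hne (this.trans (Sym2.eq_swap))

lemma good_erase {V : Finset ℕ} {E : Finset (Sym2 ℕ)} {e : Sym2 ℕ}
    (hG : Good V E) (hR : RightOK V E e) : Good V (E.erase e) :=
  ⟨hR.2, fun e' he' => hG.2 e' (Finset.mem_of_mem_erase he')⟩

lemma good_left {V : Finset ℕ} {E : Finset (Sym2 ℕ)} {v : ℕ}
    (hG : Good V E) (hv : LeftOK V E v) :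
    Good (V.erase v) (E.filter (fun e => v ∉ e)) := by
  refine ⟨hv.2, fun e' he' => ?_⟩
  rw [Finset.mem_filter] at he'
  obtain ⟨hE, hvne⟩ := he'
  obtain ⟨hd, hin⟩ := hG.2 e' hE
  exact ⟨hd, fun w hw => Finset.mem_erase.2 ⟨fun hwv => hvne (hwv ▸ hw), hin w hw⟩⟩

/-- The hypothesis needed to show that Right cannot force a win of a full move:
either Left has a legal move to a good position, or Right is stuck. -/
def GoodL (V : Finset ℕ) (E : Finset (Sym2 ℕ)) : Prop :=
  (∃ v, ∃ _ : LeftOK V E v, Good (V.erase v) (E.filter (fun e => v ∉ e))) ∨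
    (∀ e, ¬ RightOK V E e)

lemma good_goodL {V : Finset ℕ} {E : Finset (Sym2 ℕ)} (hG : Good V E) : GoodL V E := by
  by_cases h : ∃ v, LeftOK V E v
  · obtain ⟨v, hv⟩ := h
    exact Or.inl ⟨v, hv, good_left hG hv⟩
  · push_neg at h
    exact Or.inr (stuck_right hG h)

/-- The game `-1 = {|0}`, in explicit form. -/
def N1 : PGame := PGame.mk PEmpty PUnit (fun i => i.elim) (fun _ => 0)

/-- The main induction: a good classic position `G` satisfies `-1 ≤ G`, and a
`GoodL` position satisfies `-1 ⧏ G`. -/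
theorem classicG_main (N : ℕ) : ∀ V E, V.card + E.card ≤ N →
    (Good V E → N1 ≤ classicG V E) ∧ (GoodL V E → ¬ classicG V E ≤ N1) := by
  induction N using Nat.strong_induction_on with
  | _ N IH =>
  intro V E hcard
  constructor
  · intro hG
    rw [classicG, PGame.le_iff_forall_lf]
    constructor
    · intro i
      exact PEmpty.elim i
    · intro j
      apply PGame.not_le.1
      have hlt : V.card + (E.erase j.val).card < N :=
        lt_of_lt_of_le (by
          have := Finset.card_erase_lt_of_mem j.2.1
          omega) hcard
      exact (IH _ hlt V (E.erase j.val) le_rfl).2 (good_goodL (good_erase hG j.2))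
  · intro hGL hle
    rw [classicG, PGame.le_iff_forall_lf] at hle
    obtain ⟨h1, h2⟩ := hle
    rcases hGL with ⟨v, hv, hG'⟩ | hR
    · have hlt : (V.erase v).card + (E.filter (fun e => v ∉ e)).card < N := by
        have h1' : (V.erase v).card < V.card := Finset.card_erase_lt_of_mem hv.1
        have h2' : (E.filter (fun e => v ∉ e)).card ≤ E.card := Finset.card_filter_le _ _
        omega
      have hle' : N1 ≤ classicG (V.erase v) (E.filter (fun e => v ∉ e)) :=
        (IH _ hlt _ _ le_rfl).1 hG'
      exact PGame.not_lf.2 hle' (h1 ⟨v, hv⟩)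
    · refine PGame.not_lf.2 ?_ (h2 PUnit.unit)
      show (0 : PGame) ≤ _
      rw [PGame.le_iff_forall_lf]
      constructor
      · intro i
        exact PEmpty.elim i
      · intro j
        exact absurd j.2 (hR j.1)

lemma good_path (n : ℕ) (hn : n ≠ 1) : Good (Finset.range n) (pathE n) := by
  constructor
  · intro v hv
    rw [Finset.mem_range] at hv
    have hn2 : 2 ≤ n := by omega
    apply deg_pos_iff.2
    by_cases h : v < n - 1
    · exact ⟨s(v, v + 1), Finset.mem_image_of_mem _ (Finset.mem_range.2 h),
        Sym2.mem_iff.2 (Or.inl rfl)⟩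
    · refine ⟨s(n - 2, n - 2 + 1), Finset.mem_image_of_mem _ (Finset.mem_range.2 (by omega)),
        Sym2.mem_iff.2 (Or.inr (by omega))⟩
  · intro e he
    rw [pathE, Finset.mem_image] at he
    obtain ⟨i, hi, rfl⟩ := he
    rw [Finset.mem_range] at hi
    constructor
    · rw [Sym2.mk_isDiag_iff]
      omega
    · intro w hw
      rw [Sym2.mem_iff] at hw
      rw [Finset.mem_range]
      rcases hw with rfl | rfl <;> omega

lemma classicPath_not_le (n : ℕ) : ¬ classicPath n ≤ N1 := by
  rw [classicPath]
  rcases eq_or_ne n 1 with rfl | hn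
  · have hL : LeftOK (Finset.range 1) (pathE 1) 0 := by
      refine ⟨by simp, ?_⟩
      intro v hv
      rw [Finset.mem_erase, Finset.mem_range] at hv
      omega
    refine (classicG_main _ _ _ le_rfl).2 (Or.inl ⟨0, hL, ?_, ?_⟩)
    · intro v hv
      rw [Finset.mem_erase, Finset.mem_range] at hv
      omega
    · intro e he
      rw [Finset.mem_filter, pathE] at he
      simp at he
  · exact (classicG_main _ _ _ le_rfl).2 (good_goodL (good_path n hn))

lemma natPG_right_empty : ∀ n, IsEmpty (natPG n).RightMoves
  | 0 => ⟨fun i => PEmpty.elim i⟩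
  | n + 1 => by
    have ih := natPG_right_empty n
    show IsEmpty (natPG n + 1).RightMoves
    revert ih
    generalize natPG n = x
    cases x with
    | mk xl xr xL xR =>
      intro ih
      show IsEmpty (PGame.mk xl xr xL xR + PGame.mk PUnit PEmpty (fun _ => 0) PEmpty.elim).RightMoves
      rw [PGame.add_mk']
      exact ⟨fun (j : xr ⊕ PEmpty) => by
        rcases j with a | b
        · exact ih.false a
        · exact b.elim⟩

lemma negNat_le_N1 (m : ℕ) (hm : 1 ≤ m) : -natPG m ≤ N1 := by
  obtain ⟨n, rfl⟩ : ∃ n, m = n + 1 := ⟨m - 1, by omega⟩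
  have ih := natPG_right_empty n
  show -(natPG n + 1) ≤ N1
  revert ih
  generalize natPG n = x
  cases x with
  | mk xl xr xL xR =>
  intro ih
  show -(PGame.mk xl xr xL xR + PGame.mk PUnit PEmpty (fun _ => 0) PEmpty.elim) ≤ N1
  rw [PGame.add_mk', PGame.le_iff_forall_lf]
  constructor
  · intro i
    rcases (i : xr ⊕ PEmpty) with a | b
    · exact (ih.false a).elim
    · exact b.elim
  · intro j
    show ¬ (0 : PGame) ≤ _
    rw [PGame.le_iff_forall_lf]
    intro ⟨_, h⟩
    apply h (Sum.inr PUnit.unit : xl ⊕ PUnit)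
    show -(PGame.mk xl xr xL xR + PGame.mk PEmpty PEmpty PEmpty.elim PEmpty.elim) ≤ 0
    rw [PGame.add_mk', PGame.le_iff_forall_lf]
    constructor
    · intro i
      rcases (i : xr ⊕ PEmpty) with a | b
      · exact (ih.false a).elim
      · exact b.elim
    · intro j
      exact PEmpty.elim j

/-- In the Classic Variant, no path position `P_n` has a game value equal to a
negative integer. -/
theorem classic_path_no_negative_integer_value :
    ∀ (n : ℕ) (k : ℤ), k < 0 → ¬ (classicPath n ≈ intPG k) := by
  intro n k hk h
  have h1 : classicPath n ≤ intPG k := h.1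
  have hm : 1 ≤ (-k).toNat := by omega
  have h2 : intPG k ≤ N1 := by
    rw [intPG, if_neg (by omega)]
    exact negNat_le_N1 _ hm
  exact classicPath_not_le n (PGame.pg_le_trans h1 h2)

end MixedDeletion
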